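/- Let P_n(i,j,k) be the number of Stirling permutations σ ∈ Q_n with lap(σ) = i, dasc(σ) = j and dp(σ) = k (set to 0 when any index is negative). Then for all n ≥ 0 and all integers i, j, k ≥ 0, P_{n+1}(i,j,k) = i·P_n(i,j−1,k) + i·P_n(i,j,k−1) + (j+1)·P_n(i−1,j+1,k) + (k+1)·P_n(i−1,j,k+1) + (2n+3−2i−j−k)·P_n(i−1,j,k), as an identity of integers. -/

import Mathlib

open Finset MvPolynomial

/-- Stirling permutations of order `n`, encoded as functions `Fin (2*n) → Fin (n+1)`
in one-line notation (position `i` holds the letter `σ (i) ∈ {1,…,n}`), such that each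
letter `1,…,n` occurs exactly twice and all entries between the two occurrences of a
letter are larger than that letter. -/
def StirlingSet (n : ℕ) : Finset (Fin (2*n) → Fin (n+1)) :=
  Finset.univ.filter (fun σ =>
    (∀ v : Fin (n+1), (v : ℕ) ≠ 0 →
        (Finset.univ.filter (fun i => σ i = v)).card = 2) ∧
    (∀ i j k : Fin (2*n), i < j → j < k → σ i = σ k → σ i < σ j))

/-- The letter at position `i ∈ {1,…,2n}` of a Stirling permutation, with the
convention that positions outside this range (in particular position `0`) hold `0`. -/
def sval {n : ℕ} (σ : Fin (2*n) → Fin (n+1)) (i : ℕ) : ℕ :=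
  if h : 1 ≤ i ∧ i ≤ 2*n then (σ ⟨i - 1, by omega⟩ : ℕ) else 0

/-- The number of ascent-plateaus: indices `2 ≤ i ≤ 2n-1` with `σ_{i-1} < σ_i = σ_{i+1}`. -/
def apQ {n : ℕ} (σ : Fin (2*n) → Fin (n+1)) : ℕ :=
  ((Finset.Icc 2 (2*n - 1)).filter
    (fun i => sval σ (i-1) < sval σ i ∧ sval σ i = sval σ (i+1))).card

/-- The number of left ascent-plateaus: indices `1 ≤ i ≤ 2n-1` with
`σ_{i-1} < σ_i = σ_{i+1}`, where `σ_0 = 0`. -/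
def lapQ {n : ℕ} (σ : Fin (2*n) → Fin (n+1)) : ℕ :=
  ((Finset.Icc 1 (2*n - 1)).filter
    (fun i => sval σ (i-1) < sval σ i ∧ sval σ i = sval σ (i+1))).card

/-- The number of double ascents: indices `1 ≤ i ≤ 2n-1` with
`σ_{i-1} < σ_i < σ_{i+1}`, where `σ_0 = 0`. -/
def dascQ {n : ℕ} (σ : Fin (2*n) → Fin (n+1)) : ℕ :=
  ((Finset.Icc 1 (2*n - 1)).filter
    (fun i => sval σ (i-1) < sval σ i ∧ sval σ i < sval σ (i+1))).card

/-- The number of descent-plateaus: indices `2 ≤ i ≤ 2n-1` with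
`σ_{i-1} > σ_i = σ_{i+1}`. -/
def dpQ {n : ℕ} (σ : Fin (2*n) → Fin (n+1)) : ℕ :=
  ((Finset.Icc 2 (2*n - 1)).filter
    (fun i => sval σ i < sval σ (i-1) ∧ sval σ i = sval σ (i+1))).card

/-- The number of ascents: indices `1 ≤ i ≤ 2n-1` with `σ_i < σ_{i+1}` or `i = 1`. -/
def ascQ {n : ℕ} (σ : Fin (2*n) → Fin (n+1)) : ℕ :=
  ((Finset.Icc 1 (2*n - 1)).filter
    (fun i => sval σ i < sval σ (i+1) ∨ i = 1)).card

/-- The number of plateaus: indices `1 ≤ i ≤ 2n-1` with `σ_i = σ_{i+1}`. -/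
def platQ {n : ℕ} (σ : Fin (2*n) → Fin (n+1)) : ℕ :=
  ((Finset.Icc 1 (2*n - 1)).filter (fun i => sval σ i = sval σ (i+1))).card

/-- The flag ascent-plateau number: `2·ap(σ)+1` if `σ_1 = σ_2`, and `2·ap(σ)` otherwise. -/
def fapQ {n : ℕ} (σ : Fin (2*n) → Fin (n+1)) : ℕ :=
  if 1 ≤ n ∧ sval σ 1 = sval σ 2 then 2 * apQ σ + 1 else 2 * apQ σ

/-- `P_n(i,j,k)`: the number of Stirling permutations of order `n` with `lap = i`,
`dasc = j` and `dp = k`, extended by `0` when some index is negative. -/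
def Pnum (n : ℕ) (i j k : ℤ) : ℤ :=
  if 0 ≤ i ∧ 0 ≤ j ∧ 0 ≤ k then
    ((StirlingSet n).filter
      (fun σ => (lapQ σ : ℤ) = i ∧ (dascQ σ : ℤ) = j ∧ (dpQ σ : ℤ) = k)).card
  else 0

section Dev
variable {n : ℕ}

lemma sval_le (σ : Fin (2*n) → Fin (n+1)) (i : ℕ) : sval σ i ≤ n := by
  unfold sval
  split
  · exact Nat.lt_succ_iff.mp (Fin.is_lt _)
  · omega

lemma sval_zero (σ : Fin (2*n) → Fin (n+1)) (i : ℕ) (h : i = 0 ∨ 2*n < i) :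
    sval σ i = 0 := by
  unfold sval
  rw [dif_neg]; omega

lemma mem_SS (σ : Fin (2*n) → Fin (n+1)) :
    σ ∈ StirlingSet n ↔
      ((∀ v : Fin (n+1), (v : ℕ) ≠ 0 →
        (Finset.univ.filter (fun i => σ i = v)).card = 2) ∧
      (∀ i j k : Fin (2*n), i < j → j < k → σ i = σ k → σ i < σ j)) := by
  unfold StirlingSet
  simp

lemma sval_of_pos (σ : Fin (2*n) → Fin (n+1)) (i : ℕ) (h1 : 1 ≤ i) (h2 : i ≤ 2*n) :
    sval σ i = σ ⟨i-1, by omega⟩ := by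
  unfold sval
  rw [dif_pos ⟨h1, h2⟩]

/-- every position of a Stirling permutation holds a nonzero letter -/
lemma sval_pos (σ : Fin (2*n) → Fin (n+1)) (hσ : σ ∈ StirlingSet n) (i : ℕ)
    (h1 : 1 ≤ i) (h2 : i ≤ 2*n) : 1 ≤ sval σ i := by
  rw [sval_of_pos σ i h1 h2]
  set p : Fin (2*n) := ⟨i-1, by omega⟩
  by_contra h
  have hp0 : σ p = 0 := by
    have : (σ p : ℕ) = 0 := by omega
    exact Fin.ext this
  -- count: sum of fiber cards = 2n, fibers of nonzero letters give 2n already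
  have hcard := (mem_SS σ).mp hσ |>.1
  have htot : ∑ v : Fin (n+1), (Finset.univ.filter (fun q => σ q = v)).card = 2*n := by
    rw [← Finset.card_eq_sum_card_fiberwise (f := σ) (s := Finset.univ) (t := Finset.univ)
      (fun x _ => Finset.mem_univ _)]
    simp
  have hsum : ∑ v : Fin (n+1), (Finset.univ.filter (fun q => σ q = v)).card
      = (Finset.univ.filter (fun q => σ q = 0)).card +
        ∑ v ∈ Finset.univ.erase (0 : Fin (n+1)), (Finset.univ.filter (fun q => σ q = v)).card := by
    exact (Finset.add_sum_erase _ _ (Finset.mem_univ _)).symm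
  have hrest : ∑ v ∈ Finset.univ.erase (0 : Fin (n+1)), (Finset.univ.filter (fun q => σ q = v)).card
      = ∑ v ∈ Finset.univ.erase (0 : Fin (n+1)), 2 := by
    apply Finset.sum_congr rfl
    intro v hv
    apply hcard
    simp only [Finset.mem_erase] at hv
    intro h; apply hv.1; ext; simp [h]
  have hzero : 0 < (Finset.univ.filter (fun q => σ q = 0)).card := by
    apply Finset.card_pos.mpr
    exact ⟨p, by simp [hp0]⟩
  rw [hsum, hrest] at htot
  simp at htot
  omega

end Dev

section Dev2
variable {n : ℕ}

/-- Stirling condition in `sval` form. -/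
lemma sval_cond (σ : Fin (2*n) → Fin (n+1)) (hσ : σ ∈ StirlingSet n)
    (a b c : ℕ) (ha : 1 ≤ a) (hab : a < b) (hbc : b < c) (hc : c ≤ 2*n)
    (he : sval σ a = sval σ c) : sval σ a < sval σ b := by
  have h2 := (mem_SS σ).mp hσ |>.2
  rw [sval_of_pos σ a ha (by omega), sval_of_pos σ b (by omega) (by omega),
    sval_of_pos σ c (by omega) hc] at *
  have := h2 ⟨a-1, by omega⟩ ⟨b-1, by omega⟩ ⟨c-1, by omega⟩
    (by simp [Fin.lt_def]; omega) (by simp [Fin.lt_def]; omega)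
    (by apply Fin.ext; exact he)
  exact this

/-- the other copy of a letter -/
lemma exists_other (σ : Fin (2*n) → Fin (n+1)) (hσ : σ ∈ StirlingSet n)
    (t : ℕ) (h1 : 1 ≤ t) (h2 : t ≤ 2*n) :
    ∃ s, 1 ≤ s ∧ s ≤ 2*n ∧ s ≠ t ∧ sval σ s = sval σ t := by
  have hcard := (mem_SS σ).mp hσ |>.1
  set p : Fin (2*n) := ⟨t-1, by omega⟩ with hp
  have hpv : (p : ℕ) = t - 1 := rfl
  have hsv : sval σ t = (σ p : ℕ) := sval_of_pos σ t h1 h2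
  have hv : (σ p : ℕ) ≠ 0 := by
    have := sval_pos σ hσ t h1 h2
    omega
  have hc2 := hcard (σ p) hv
  have hmem : p ∈ Finset.univ.filter (fun q => σ q = σ p) := by simp
  have : 1 < (Finset.univ.filter (fun q => σ q = σ p)).card := by omega
  obtain ⟨q, hq, hqp⟩ := Finset.exists_mem_ne this p
  simp only [Finset.mem_filter] at hq
  refine ⟨(q:ℕ)+1, by omega, by omega, ?_, ?_⟩
  · intro h
    apply hqp
    apply Fin.ext
    omega
  · have hq2 : sval σ ((q:ℕ)+1) = (σ q : ℕ) := by
      have := sval_of_pos σ ((q:ℕ)+1) (by omega) (by omega)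
      rw [this]
      congr 1
    rw [hq2, hsv, hq.2]

/-- no letter appears three times -/
lemma no_triple (σ : Fin (2*n) → Fin (n+1)) (hσ : σ ∈ StirlingSet n)
    (t : ℕ) (h0 : 1 ≤ sval σ t) (he1 : sval σ t = sval σ (t+1))
    (he2 : sval σ (t+1) = sval σ (t+2)) : False := by
  have ht1 : 1 ≤ t := by
    rcases Nat.eq_zero_or_pos t with h | h
    · rw [h, sval_zero σ 0 (Or.inl rfl)] at h0; omega
    · omega
  have ht2 : t ≤ 2*n := by
    by_contra h
    rw [sval_zero σ t (Or.inr (by omega))] at h0; omega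
  have ht3 : t + 2 ≤ 2*n := by
    by_contra h
    rw [sval_zero σ (t+2) (Or.inr (by omega))] at he2
    omega
  have hcard := (mem_SS σ).mp hσ |>.1
  set p1 : Fin (2*n) := ⟨t-1, by omega⟩ with hpd1
  set p2 : Fin (2*n) := ⟨t, by omega⟩ with hpd2
  set p3 : Fin (2*n) := ⟨t+1, by omega⟩ with hpd3
  have he1' : (p1 : ℕ) = t - 1 := rfl
  have he2' : (p2 : ℕ) = t := rfl
  have he3' : (p3 : ℕ) = t + 1 := rfl
  have hv1 : sval σ t = (σ p1 : ℕ) := sval_of_pos σ t ht1 ht2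
  have hv2 : sval σ (t+1) = (σ p2 : ℕ) := by
    have := sval_of_pos σ (t+1) (by omega) (by omega)
    rw [this]; congr 1
  have hv3 : sval σ (t+2) = (σ p3 : ℕ) := by
    have := sval_of_pos σ (t+2) (by omega) (by omega)
    rw [this]; congr 1
  have hvne : (σ p1 : ℕ) ≠ 0 := by omega
  have hc2 := hcard (σ p1) hvne
  have hsub : ({p1, p2, p3} : Finset (Fin (2*n))) ⊆ Finset.univ.filter (fun q => σ q = σ p1) := by
    intro x hx
    simp only [Finset.mem_insert, Finset.mem_singleton] at hx
    simp only [Finset.mem_filter, Finset.mem_univ, true_and]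
    rcases hx with h|h|h
    · rw [h]
    · rw [h]; apply Fin.ext; omega
    · rw [h]; apply Fin.ext; omega
  have hcard3 : ({p1, p2, p3} : Finset (Fin (2*n))).card = 3 := by
    rw [Finset.card_eq_three]
    refine ⟨p1, p2, p3, ?_, ?_, ?_, rfl⟩ <;>
      · simp only [ne_eq, Fin.ext_iff, he1', he2', he3']
        omega
  have := Finset.card_le_card hsub
  omega

/-- no strict "peak" inside a Stirling permutation -/
lemma no_peak (σ : Fin (2*n) → Fin (n+1)) (hσ : σ ∈ StirlingSet n)
    (t : ℕ) (h : sval σ (t-1) < sval σ t) : ¬ (sval σ (t+1) < sval σ t) := by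
  intro hlt
  have ht1 : 1 ≤ t := by
    rcases Nat.eq_zero_or_pos t with h' | h'
    · subst h'; simp at h
    · omega
  have ht2 : t ≤ 2*n := by
    by_contra hc
    rw [sval_zero σ t (Or.inr (by omega))] at h; omega
  obtain ⟨s, hs1, hs2, hsne, hse⟩ := exists_other σ hσ t ht1 ht2
  rcases Nat.lt_or_ge s t with hst | hst
  · by_cases hst2 : s = t - 1
    · rw [hst2] at hse; omega
    · have := sval_cond σ hσ s (t-1) t (by omega) (by omega) (by omega) ht2 hse
      omega
  · by_cases hst2 : s = t + 1
    · rw [hst2] at hse; omega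
    · have := sval_cond σ hσ t (t+1) s (by omega) (by omega) (by omega) hs2 hse.symm
      omega

end Dev2

section Dev3
variable {n : ℕ}

/-- insertion of the pair `(n+1)(n+1)` after position `g` (gaps `g = 0,…,2n`). -/
def ins (σ : Fin (2*n) → Fin (n+1)) (g : ℕ) : Fin (2*(n+1)) → Fin (n+2) :=
  fun p =>
    if h : (p:ℕ) < min g (2*n) then (σ ⟨p, by omega⟩).castSucc
    else if h2 : (p:ℕ) < g+2 then Fin.last (n+1)
    else (σ ⟨(p:ℕ)-2, by have := p.isLt; omega⟩).castSucc

lemma sval_ins (σ : Fin (2*n) → Fin (n+1)) (g : ℕ) (hg : g ≤ 2*n) (i : ℕ) :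
    sval (ins σ g) i =
      if i ≤ g then sval σ i
      else if i ≤ g+2 then n+1
      else sval σ (i-2) := by
  by_cases h1 : i ≤ g
  · rw [if_pos h1]
    by_cases h0 : i = 0
    · subst h0
      rw [sval_zero _ 0 (Or.inl rfl), sval_zero _ 0 (Or.inl rfl)]
    · have hi1 : 1 ≤ i := by omega
      have hi2 : i ≤ 2*n := by omega
      rw [sval_of_pos _ i hi1 (by omega), sval_of_pos σ i hi1 hi2]
      unfold ins
      rw [dif_pos (by simp; omega)]
      simp
  · rw [if_neg h1]
    by_cases h2 : i ≤ g+2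
    · rw [if_pos h2]
      have hi1 : 1 ≤ i := by omega
      have hi2 : i ≤ 2*(n+1) := by omega
      rw [sval_of_pos _ i hi1 hi2]
      unfold ins
      rw [dif_neg (by simp; omega), dif_pos (by simp; omega)]
      simp
    · rw [if_neg h2]
      by_cases h3 : i ≤ 2*(n+1)
      · have hi1 : 1 ≤ i := by omega
        rw [sval_of_pos _ i hi1 h3, sval_of_pos σ (i-2) (by omega) (by omega)]
        unfold ins
        rw [dif_neg (by simp; omega), dif_neg (by simp; omega)]
        simp only [Fin.coe_castSucc]
        congr 2 <;> omega
      · rw [sval_zero _ i (Or.inr (by omega)), sval_zero σ (i-2) (Or.inr (by omega))]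

/-- left-ascent-plateau predicate at index `t` -/
def Lp (σ : Fin (2*n) → Fin (n+1)) (t : ℕ) : Prop :=
  sval σ (t-1) < sval σ t ∧ sval σ t = sval σ (t+1)

/-- double-ascent predicate -/
def Da (σ : Fin (2*n) → Fin (n+1)) (t : ℕ) : Prop :=
  sval σ (t-1) < sval σ t ∧ sval σ t < sval σ (t+1)

/-- descent-plateau predicate -/
def Dp (σ : Fin (2*n) → Fin (n+1)) (t : ℕ) : Prop :=
  sval σ t < sval σ (t-1) ∧ sval σ t = sval σ (t+1)

instance (σ : Fin (2*n) → Fin (n+1)) (t : ℕ) : Decidable (Lp σ t) := by unfold Lp; infer_instance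
instance (σ : Fin (2*n) → Fin (n+1)) (t : ℕ) : Decidable (Da σ t) := by unfold Da; infer_instance
instance (σ : Fin (2*n) → Fin (n+1)) (t : ℕ) : Decidable (Dp σ t) := by unfold Dp; infer_instance

lemma Lp_false (σ : Fin (2*n) → Fin (n+1)) (hσ : σ ∈ StirlingSet n) (t : ℕ)
    (h : t = 0 ∨ 2*n ≤ t) : ¬ Lp σ t := by
  intro hLp
  obtain ⟨hl, he⟩ := hLp
  rcases h with h | h
  · subst h; simp at hl
  · rcases Nat.eq_or_lt_of_le h with h' | h'
    · have h1 : sval σ (t+1) = 0 := sval_zero σ _ (Or.inr (by omega))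
      rcases Nat.eq_zero_or_pos n with hn | hn
      · have : sval σ t = 0 := sval_zero σ _ (Or.inr (by omega)); omega
      · have : 1 ≤ sval σ t := sval_pos σ hσ t (by omega) (by omega)
        omega
    · have : sval σ t = 0 := sval_zero σ _ (Or.inr h')
      omega

lemma Da_false (σ : Fin (2*n) → Fin (n+1)) (t : ℕ)
    (h : t = 0 ∨ 2*n ≤ t) : ¬ Da σ t := by
  intro hDa
  obtain ⟨hl, he⟩ := hDa
  rcases h with h | h
  · subst h; simp at hl
  · have : sval σ (t+1) = 0 := sval_zero σ _ (Or.inr (by omega))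
    omega

lemma Dp_false (σ : Fin (2*n) → Fin (n+1)) (hσ : σ ∈ StirlingSet n) (t : ℕ)
    (h : t ≤ 1 ∨ t = 2*n) : ¬ Dp σ t := by
  intro hDp
  obtain ⟨hl, he⟩ := hDp
  rcases h with h | h
  · interval_cases t
    · simp at hl
    · have : sval σ 0 = 0 := sval_zero σ _ (Or.inl rfl)
      simp at hl
      omega
  · subst h
    rcases Nat.eq_zero_or_pos n with hn | hn
    · subst hn; simp at hl
    · have h1 : sval σ (2*n+1) = 0 := sval_zero σ _ (Or.inr (by omega))
      have : 1 ≤ sval σ (2*n) := sval_pos σ hσ (2*n) (by omega) (by omega)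
      omega

/-- `lapQ` as a sum of indicators over `range M` -/
lemma lapQ_eq_sum (σ : Fin (2*n) → Fin (n+1)) (hσ : σ ∈ StirlingSet n) (M : ℕ)
    (hM : 2*n ≤ M) :
    lapQ σ = ∑ t ∈ Finset.range M, (if Lp σ t then 1 else 0) := by
  unfold lapQ Lp
  rw [Finset.card_filter]
  apply Finset.sum_subset
  · intro x hx
    simp only [Finset.mem_Icc] at hx
    simp only [Finset.mem_range]
    omega
  · intro x hx hx2
    simp only [Finset.mem_Icc] at hx2
    rw [if_neg]
    exact fun hh => Lp_false σ hσ x (by omega) hh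

lemma dascQ_eq_sum (σ : Fin (2*n) → Fin (n+1)) (M : ℕ)
    (hM : 2*n ≤ M) :
    dascQ σ = ∑ t ∈ Finset.range M, (if Da σ t then 1 else 0) := by
  unfold dascQ Da
  rw [Finset.card_filter]
  apply Finset.sum_subset
  · intro x hx
    simp only [Finset.mem_Icc] at hx
    simp only [Finset.mem_range]
    omega
  · intro x hx hx2
    simp only [Finset.mem_Icc] at hx2
    rw [if_neg]
    exact fun hh => Da_false σ x (by omega) hh

lemma dpQ_eq_sum (σ : Fin (2*n) → Fin (n+1)) (hσ : σ ∈ StirlingSet n) :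
    dpQ σ = ∑ t ∈ Finset.range (2*n+1), (if Dp σ t then 1 else 0) := by
  unfold dpQ Dp
  rw [Finset.card_filter]
  apply Finset.sum_subset
  · intro x hx
    simp only [Finset.mem_Icc] at hx
    simp only [Finset.mem_range]
    omega
  · intro x hx hx2
    simp only [Finset.mem_range] at hx
    simp only [Finset.mem_Icc] at hx2
    rw [if_neg]
    exact fun hh => Dp_false σ hσ x (by omega) hh

end Dev3

section Dev4
variable {n : ℕ}

lemma sval_ins_low (σ : Fin (2*n) → Fin (n+1)) {g : ℕ} (hg : g ≤ 2*n) {i : ℕ}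
    (h : i ≤ g) : sval (ins σ g) i = sval σ i := by
  rw [sval_ins σ g hg, if_pos h]

lemma sval_ins_mid (σ : Fin (2*n) → Fin (n+1)) {g : ℕ} (hg : g ≤ 2*n) {i : ℕ}
    (h1 : g < i) (h2 : i ≤ g+2) : sval (ins σ g) i = n+1 := by
  rw [sval_ins σ g hg, if_neg (by omega), if_pos h2]

lemma sval_ins_high (σ : Fin (2*n) → Fin (n+1)) {g : ℕ} (hg : g ≤ 2*n) {i : ℕ}
    (h : g+2 < i) : sval (ins σ g) i = sval σ (i-2) := by
  rw [sval_ins σ g hg, if_neg (by omega), if_neg (by omega)]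

/-- occurrence count in `sval` form -/
lemma occ_iff (σ : Fin (2*n) → Fin (n+1)) (v : Fin (n+1)) :
    (Finset.univ.filter (fun p => σ p = v)).card
      = ((Finset.Icc 1 (2*n)).filter (fun t => sval σ t = (v:ℕ))).card := by
  refine Finset.card_bij (fun p _ => (p:ℕ)+1) ?_ ?_ ?_
  · intro p hp
    simp only [Finset.mem_filter, Finset.mem_univ, true_and] at hp
    simp only [Finset.mem_filter, Finset.mem_Icc]
    refine ⟨⟨by omega, by omega⟩, ?_⟩
    rw [sval_of_pos σ _ (by omega) (by omega)]
    have : (⟨(p:ℕ)+1-1, by omega⟩ : Fin (2*n)) = p := by apply Fin.ext; simp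
    rw [this, hp]
  · intro p1 h1 p2 h2 he
    apply Fin.ext; omega
  · intro t ht
    simp only [Finset.mem_filter, Finset.mem_Icc] at ht
    refine ⟨⟨t-1, by omega⟩, ?_, by dsimp only; omega⟩
    simp only [Finset.mem_filter, Finset.mem_univ, true_and]
    apply Fin.ext
    rw [← sval_of_pos σ t ht.1.1 ht.1.2]
    exact ht.2

/-- the Stirling condition from its `sval` form -/
lemma cond_of_sval (σ : Fin (2*n) → Fin (n+1))
    (h : ∀ a b c : ℕ, 1 ≤ a → a < b → b < c → c ≤ 2*n →
      sval σ a = sval σ c → sval σ a < sval σ b) :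
    ∀ i j k : Fin (2*n), i < j → j < k → σ i = σ k → σ i < σ j := by
  intro i j k hij hjk he
  have e1 : sval σ ((i:ℕ)+1) = (σ i : ℕ) := by
    rw [sval_of_pos σ _ (by omega) (by omega)]; congr 1
  have e2 : sval σ ((j:ℕ)+1) = (σ j : ℕ) := by
    rw [sval_of_pos σ _ (by omega) (by omega)]; congr 1
  have e3 : sval σ ((k:ℕ)+1) = (σ k : ℕ) := by
    rw [sval_of_pos σ _ (by omega) (by omega)]; congr 1
  have hij' : (i:ℕ) < (j:ℕ) := hij
  have hjk' : (j:ℕ) < (k:ℕ) := hjk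
  have := h ((i:ℕ)+1) ((j:ℕ)+1) ((k:ℕ)+1) (by omega) (by omega) (by omega) (by omega)
    (by rw [e1, e3, he])
  rw [e1, e2] at this
  exact this

/-- the insertion of a Stirling permutation is a Stirling permutation -/
lemma ins_mem (σ : Fin (2*n) → Fin (n+1)) (hσ : σ ∈ StirlingSet n) (g : ℕ)
    (hg : g ≤ 2*n) : ins σ g ∈ StirlingSet (n+1) := by
  have hle := sval_le σ
  apply (mem_SS (n := n+1) (ins σ g)).mpr
  constructor
  · -- occurrence counts
    intro v hv
    rw [occ_iff]
    by_cases hvl : (v:ℕ) = n+1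
    · -- the new letter n+1 occurs exactly at positions g+1, g+2
      have : ((Finset.Icc 1 (2*(n+1))).filter (fun t => sval (ins σ g) t = (v:ℕ)))
          = {g+1, g+2} := by
        ext t
        simp only [Finset.mem_filter, Finset.mem_Icc, Finset.mem_insert, Finset.mem_singleton,
          hvl]
        constructor
        · rintro ⟨⟨ht1, ht2⟩, hte⟩
          by_cases hl : t ≤ g
          · rw [sval_ins_low σ hg hl] at hte
            have := hle t; omega
          · by_cases hm : t ≤ g+2
            · omega
            · rw [sval_ins_high σ hg (by omega)] at hte
              have := hle (t-2); omega
        · rintro (rfl | rfl)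
          · exact ⟨⟨by omega, by omega⟩, sval_ins_mid σ hg (by omega) (by omega)⟩
          · exact ⟨⟨by omega, by omega⟩, sval_ins_mid σ hg (by omega) (by omega)⟩
      rw [this]
      rw [Finset.card_insert_of_notMem (by simp), Finset.card_singleton]
    · -- old letters
      have hv1 : 1 ≤ (v:ℕ) := by omega
      have hvn : (v:ℕ) ≤ n := by have := v.isLt; omega
      have hbij : ((Finset.Icc 1 (2*n)).filter (fun t => sval σ t = (v:ℕ))).card
          = ((Finset.Icc 1 (2*(n+1))).filter (fun t => sval (ins σ g) t = (v:ℕ))).card := by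
        refine Finset.card_bij (fun t _ => if t ≤ g then t else t+2) ?_ ?_ ?_
        · intro t ht
          simp only [Finset.mem_filter, Finset.mem_Icc] at ht ⊢
          by_cases hl : t ≤ g
          · rw [if_pos hl, sval_ins_low σ hg hl]
            exact ⟨⟨by omega, by omega⟩, ht.2⟩
          · rw [if_neg hl, sval_ins_high σ hg (by omega)]
            have h22 : t + 2 - 2 = t := by omega
            rw [h22]
            exact ⟨⟨by omega, by omega⟩, ht.2⟩
        · intro t1 h1 t2 h2 he
          split_ifs at he <;> omega
        · intro s hs
          simp only [Finset.mem_filter, Finset.mem_Icc] at hs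
          by_cases hl : s ≤ g
          · rw [sval_ins_low σ hg hl] at hs
            exact ⟨s, by simp only [Finset.mem_filter, Finset.mem_Icc]; exact ⟨⟨by omega, by omega⟩, hs.2⟩,
              by rw [if_pos hl]⟩
          · by_cases hm : s ≤ g+2
            · rw [sval_ins_mid σ hg (by omega) hm] at hs
              omega
            · rw [sval_ins_high σ hg (by omega)] at hs
              refine ⟨s-2, ?_, ?_⟩
              · simp only [Finset.mem_filter, Finset.mem_Icc]
                exact ⟨⟨by omega, by omega⟩, hs.2⟩
              · rw [if_neg (by omega)]; omega
      have hocc : ((Finset.Icc 1 (2*n)).filter (fun t => sval σ t = (v:ℕ))).card = 2 := by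
        have h2 := (mem_SS σ).mp hσ |>.1 ⟨(v:ℕ), by omega⟩ (by
          show ((⟨(v:ℕ), by omega⟩ : Fin (n+1)) : ℕ) ≠ 0
          simp only [Fin.val_mk]
          omega)
        rw [occ_iff σ ⟨(v:ℕ), by omega⟩] at h2
        exact h2
      rw [← hbij]
      exact hocc
  · -- Stirling betweenness condition
    apply cond_of_sval
    intro a b c ha hab hbc hc he
    have hM : ∀ x, g < x → x ≤ g+2 → sval (ins σ g) x = n+1 := fun x h1 h2 =>
      sval_ins_mid σ hg h1 h2
    by_cases hamid : g < a ∧ a ≤ g+2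
    · -- a in the middle: c must also be mid, impossible, or high with small value
      rw [hM a hamid.1 hamid.2] at he ⊢
      by_cases hcmid : c ≤ g+2
      · omega
      · rw [sval_ins_high σ hg (by omega)] at he
        have := hle (c-2); omega
    · by_cases hcmid : g < c ∧ c ≤ g+2
      · -- c mid, a not mid: a low
        rw [hM c hcmid.1 hcmid.2] at he
        have hal : a ≤ g := by omega
        rw [sval_ins_low σ hg hal] at he
        have := hle a; omega
      · -- a, c both low or high
        have ha' : sval (ins σ g) a = sval σ (if a ≤ g then a else a - 2) := by
          split_ifs with h
          · exact sval_ins_low σ hg h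
          · exact sval_ins_high σ hg (by omega)
        have hc' : sval (ins σ g) c = sval σ (if c ≤ g then c else c - 2) := by
          split_ifs with h
          · exact sval_ins_low σ hg h
          · exact sval_ins_high σ hg (by omega)
        by_cases hbmid : g < b ∧ b ≤ g+2
        · -- b is the inserted letter: value n+1, bigger than anything
          rw [hM b hbmid.1 hbmid.2, ha']
          split_ifs with h
          · have := hle a; omega
          · have := hle (a-2); omega
        · have hb' : sval (ins σ g) b = sval σ (if b ≤ g then b else b - 2) := by
            split_ifs with h
            · exact sval_ins_low σ hg h
            · exact sval_ins_high σ hg (by omega)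
          rw [ha', hc'] at he
          rw [ha', hb']
          apply sval_cond σ hσ _ _ _ ?_ ?_ ?_ ?_ he
          · split_ifs with h
            · exact ha
            · omega
          · split_ifs with h1 h2
            · omega
            · omega
            · omega
            · omega
          · split_ifs with h1 h2
            · omega
            · omega
            · omega
            · omega
          · split_ifs with h
            · omega
            · omega
  
end Dev4

section Dev5
variable {n : ℕ}

lemma sum_split (M g : ℕ) (hgM : g < M) (f : ℕ → ℕ) :
    ∑ t ∈ Finset.range (M+2), f t
      = (∑ t ∈ Finset.range M, f (if t ≤ g then t else t+2)) + f (g+1) + f (g+2) := by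
  have himg : (Finset.range M).image (fun t => if t ≤ g then t else t+2)
      = (Finset.range (M+2)).filter (fun x => ¬(x = g+1 ∨ x = g+2)) := by
    ext x
    simp only [Finset.mem_image, Finset.mem_filter, Finset.mem_range]
    constructor
    · rintro ⟨t, ht, rfl⟩
      split_ifs with h <;> omega
    · rintro ⟨hx, hne⟩
      by_cases h : x ≤ g
      · exact ⟨x, by omega, by rw [if_pos h]⟩
      · exact ⟨x-2, by omega, by rw [if_neg (by omega)]; omega⟩
  have hsum2 : ∑ t ∈ Finset.range M, f (if t ≤ g then t else t+2)
      = ∑ x ∈ (Finset.range M).image (fun t => if t ≤ g then t else t+2), f x := by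
    rw [Finset.sum_image]
    intro a ha b hb he
    dsimp only at he
    split_ifs at he <;> omega
  have hpair : (Finset.range (M+2)).filter (fun x => (x = g+1 ∨ x = g+2)) = {g+1, g+2} := by
    ext x
    simp only [Finset.mem_filter, Finset.mem_range, Finset.mem_insert, Finset.mem_singleton]
    exact ⟨fun h => h.2, fun h => ⟨by omega, h⟩⟩
  rw [← Finset.sum_filter_add_sum_filter_not (Finset.range (M+2)) (fun x => x = g+1 ∨ x = g+2) f]
  rw [hpair, ← himg, ← hsum2, Finset.sum_pair (by omega : g+1 ≠ g+2)]
  omega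

lemma sum_replace_two {M a : ℕ} (f f' : ℕ → ℕ) (ha : a < M)
    (hpt : ∀ t, t < M → t ≠ a → t ≠ a+1 → f t = f' t)
    (hb : a+1 < M ∨ f (a+1) = f' (a+1)) :
    ∑ t ∈ Finset.range M, f t + f' a + f' (a+1)
      = ∑ t ∈ Finset.range M, f' t + f a + f (a+1) := by
  have m1 : a ∈ Finset.range M := Finset.mem_range.mpr ha
  have e1 : ∑ t ∈ Finset.range M, f t = f a + ∑ t ∈ (Finset.range M).erase a, f t :=
    (Finset.add_sum_erase _ f m1).symm
  have e1' : ∑ t ∈ Finset.range M, f' t = f' a + ∑ t ∈ (Finset.range M).erase a, f' t :=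
    (Finset.add_sum_erase _ f' m1).symm
  by_cases hm : a+1 < M
  · have m2 : a+1 ∈ (Finset.range M).erase a := by
      simp only [Finset.mem_erase, Finset.mem_range]
      omega
    have e2 : ∑ t ∈ (Finset.range M).erase a, f t
        = f (a+1) + ∑ t ∈ ((Finset.range M).erase a).erase (a+1), f t :=
      (Finset.add_sum_erase _ f m2).symm
    have e2' : ∑ t ∈ (Finset.range M).erase a, f' t
        = f' (a+1) + ∑ t ∈ ((Finset.range M).erase a).erase (a+1), f' t :=
      (Finset.add_sum_erase _ f' m2).symm
    have ecg : ∑ t ∈ ((Finset.range M).erase a).erase (a+1), f t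
        = ∑ t ∈ ((Finset.range M).erase a).erase (a+1), f' t := by
      apply Finset.sum_congr rfl
      intro t ht
      simp only [Finset.mem_erase, Finset.mem_range] at ht
      exact hpt t ht.2.2 ht.2.1 ht.1
    omega
  · have hfb : f (a+1) = f' (a+1) := by
      rcases hb with hb | hb
      · exact absurd hb hm
      · exact hb
    have ecg : ∑ t ∈ (Finset.range M).erase a, f t
        = ∑ t ∈ (Finset.range M).erase a, f' t := by
      apply Finset.sum_congr rfl
      intro t ht
      simp only [Finset.mem_erase, Finset.mem_range] at ht
      exact hpt t ht.2 ht.1 (by omega)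
    omega

variable (σ : Fin (2*n) → Fin (n+1)) {g : ℕ}

-- boundary value lemmas for the inserted permutation
lemma bLp_g (hg : g ≤ 2*n) : ¬ Lp (ins σ g) g := by
  intro h
  obtain ⟨_, h2⟩ := h
  rw [sval_ins_low σ hg (le_refl g), sval_ins_mid σ hg (by omega) (by omega)] at h2
  have := sval_le σ g; omega

lemma bLp_g1 (hg : g ≤ 2*n) : Lp (ins σ g) (g+1) := by
  constructor
  · simp only [Nat.add_sub_cancel]
    rw [sval_ins_low σ hg (le_refl g), sval_ins_mid σ hg (by omega) (by omega)]
    have := sval_le σ g; omega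
  · rw [sval_ins_mid σ hg (by omega) (by omega), sval_ins_mid σ hg (by omega) (by omega)]

lemma bLp_g2 (hg : g ≤ 2*n) : ¬ Lp (ins σ g) (g+2) := by
  intro h
  obtain ⟨h1, _⟩ := h
  have e : g+2-1 = g+1 := by omega
  rw [e, sval_ins_mid σ hg (by omega) (by omega), sval_ins_mid σ hg (by omega) (by omega)] at h1
  omega

lemma bLp_g3 (hg : g ≤ 2*n) : ¬ Lp (ins σ g) (g+3) := by
  intro h
  obtain ⟨h1, _⟩ := h
  have e : g+3-1 = g+2 := by omega
  rw [e, sval_ins_mid σ hg (by omega) (by omega), sval_ins_high σ hg (by omega)] at h1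
  have := sval_le σ (g+3-2); omega

lemma bDa_g (hg : g ≤ 2*n) :
    Da (ins σ g) g ↔ sval σ (g-1) < sval σ g := by
  constructor
  · intro h
    obtain ⟨h1, _⟩ := h
    rwa [sval_ins_low σ hg (by omega), sval_ins_low σ hg (le_refl g)] at h1
  · intro h
    constructor
    · rwa [sval_ins_low σ hg (by omega), sval_ins_low σ hg (le_refl g)]
    · rw [sval_ins_low σ hg (le_refl g), sval_ins_mid σ hg (by omega) (by omega)]
      have := sval_le σ g; omega

lemma bDa_g1 (hg : g ≤ 2*n) : ¬ Da (ins σ g) (g+1) := by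
  intro h
  obtain ⟨_, h2⟩ := h
  rw [sval_ins_mid σ hg (by omega) (by omega), sval_ins_mid σ hg (by omega) (by omega)] at h2
  omega

lemma bDa_g2 (hg : g ≤ 2*n) : ¬ Da (ins σ g) (g+2) := by
  intro h
  obtain ⟨_, h2⟩ := h
  rw [sval_ins_mid σ hg (by omega) (by omega), sval_ins_high σ hg (by omega)] at h2
  have := sval_le σ (g+2+1-2); omega

lemma bDa_g3 (hg : g ≤ 2*n) : ¬ Da (ins σ g) (g+3) := by
  intro h
  obtain ⟨h1, _⟩ := h
  have e : g+3-1 = g+2 := by omega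
  rw [e, sval_ins_mid σ hg (by omega) (by omega), sval_ins_high σ hg (by omega)] at h1
  have := sval_le σ (g+3-2); omega

lemma bDp_g (hg : g ≤ 2*n) : ¬ Dp (ins σ g) g := by
  intro h
  obtain ⟨_, h2⟩ := h
  rw [sval_ins_low σ hg (le_refl g), sval_ins_mid σ hg (by omega) (by omega)] at h2
  have := sval_le σ g; omega

lemma bDp_g1 (hg : g ≤ 2*n) : ¬ Dp (ins σ g) (g+1) := by
  intro h
  obtain ⟨h1, _⟩ := h
  simp only [Nat.add_sub_cancel] at h1
  rw [sval_ins_low σ hg (le_refl g), sval_ins_mid σ hg (by omega) (by omega)] at h1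
  have := sval_le σ g; omega

lemma bDp_g2 (hg : g ≤ 2*n) : ¬ Dp (ins σ g) (g+2) := by
  intro h
  obtain ⟨h1, _⟩ := h
  have e : g+2-1 = g+1 := by omega
  rw [e, sval_ins_mid σ hg (by omega) (by omega), sval_ins_mid σ hg (by omega) (by omega)] at h1
  omega

lemma bDp_g3 (hg : g ≤ 2*n) :
    Dp (ins σ g) (g+3) ↔ sval σ (g+1) = sval σ (g+2) := by
  unfold Dp
  have e : g+3-1 = g+2 := by omega
  rw [e]
  rw [sval_ins_high σ hg (i := g+3) (by omega)]
  rw [sval_ins_high σ hg (i := g+3+1) (by omega)]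
  rw [sval_ins_mid σ hg (i := g+2) (by omega) (by omega)]
  have e2 : g+3-2 = g+1 := by omega
  have e3 : g+3+1-2 = g+2 := by omega
  rw [e2, e3]
  have := sval_le σ (g+1)
  constructor
  · exact fun h => h.2
  · exact fun h => ⟨by omega, h⟩

-- pointwise transfer lemmas
lemma pt_low (hg : g ≤ 2*n) {t : ℕ} (ht : t < g) :
    (sval (ins σ g) (t-1) = sval σ (t-1)) ∧ (sval (ins σ g) t = sval σ t)
      ∧ (sval (ins σ g) (t+1) = sval σ (t+1)) :=
  ⟨sval_ins_low σ hg (by omega), sval_ins_low σ hg (by omega),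
    sval_ins_low σ hg (by omega)⟩

lemma pt_high (hg : g ≤ 2*n) {t : ℕ} (ht : g+2 ≤ t) :
    (sval (ins σ g) (t+2-1) = sval σ (t-1)) ∧ (sval (ins σ g) (t+2) = sval σ t)
      ∧ (sval (ins σ g) (t+2+1) = sval σ (t+1)) := by
  refine ⟨?_, ?_, ?_⟩
  · have e : t+2-1 = t+1 := by omega
    rw [e, sval_ins_high σ hg (by omega)]
    congr 1
  · rw [sval_ins_high σ hg (by omega)]
    congr 1
  · rw [sval_ins_high σ hg (by omega)]
    congr 1

lemma pt_Lp (hg : g ≤ 2*n) (t : ℕ) (ht : t ≠ g) (ht2 : t ≠ g+1) :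
    (if Lp (ins σ g) (if t ≤ g then t else t+2) then 1 else 0)
      = if Lp σ t then (1:ℕ) else 0 := by
  by_cases h : t ≤ g
  · rw [if_pos h]
    obtain ⟨e1, e2, e3⟩ := pt_low σ hg (by omega : t < g)
    unfold Lp
    simp only [e1, e2, e3]
  · rw [if_neg h]
    obtain ⟨e1, e2, e3⟩ := pt_high σ hg (by omega : g+2 ≤ t)
    unfold Lp
    simp only [e1, e2, e3]

lemma pt_Da (hg : g ≤ 2*n) (t : ℕ) (ht : t ≠ g) (ht2 : t ≠ g+1) :
    (if Da (ins σ g) (if t ≤ g then t else t+2) then 1 else 0)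
      = if Da σ t then (1:ℕ) else 0 := by
  by_cases h : t ≤ g
  · rw [if_pos h]
    obtain ⟨e1, e2, e3⟩ := pt_low σ hg (by omega : t < g)
    unfold Da
    simp only [e1, e2, e3]
  · rw [if_neg h]
    obtain ⟨e1, e2, e3⟩ := pt_high σ hg (by omega : g+2 ≤ t)
    unfold Da
    simp only [e1, e2, e3]

lemma pt_Dp (hg : g ≤ 2*n) (t : ℕ) (ht : t ≠ g) (ht2 : t ≠ g+1) :
    (if Dp (ins σ g) (if t ≤ g then t else t+2) then 1 else 0)
      = if Dp σ t then (1:ℕ) else 0 := by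
  by_cases h : t ≤ g
  · rw [if_pos h]
    obtain ⟨e1, e2, e3⟩ := pt_low σ hg (by omega : t < g)
    unfold Dp
    simp only [e1, e2, e3]
  · rw [if_neg h]
    obtain ⟨e1, e2, e3⟩ := pt_high σ hg (by omega : g+2 ≤ t)
    unfold Dp
    simp only [e1, e2, e3]

end Dev5

section Dev6
variable {n : ℕ} (σ : Fin (2*n) → Fin (n+1)) {g : ℕ}

lemma F1 (hσ : σ ∈ StirlingSet n) (hg : g ≤ 2*n) :
    lapQ (ins σ g) + (if Lp σ g then 1 else 0) + (if Lp σ (g+1) then 1 else 0)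
      = lapQ σ + 1 := by
  have hτ := ins_mem σ hσ g hg
  rw [lapQ_eq_sum (ins σ g) hτ ((2*n+1)+2) (by omega),
    lapQ_eq_sum σ hσ (2*n+1) (by omega),
    sum_split (2*n+1) g (by omega)]
  rw [if_pos (bLp_g1 σ hg), if_neg (bLp_g2 σ hg)]
  have hsrt := sum_replace_two (M := 2*n+1) (a := g)
    (fun t => if Lp (ins σ g) (if t ≤ g then t else t+2) then 1 else 0)
    (fun t => if Lp σ t then 1 else 0) (by omega)
    (fun t _ h1 h2 => pt_Lp σ hg t h1 h2)
    (by
      by_cases hgn : g < 2*n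
      · left; omega
      · right
        rw [if_neg (by omega : ¬ g+1 ≤ g)]
        rw [if_neg (bLp_g3 σ hg), if_neg]
        intro hcon
        obtain ⟨h1, _⟩ := hcon
        have : sval σ (g+1+1) = 0 := sval_zero σ _ (Or.inr (by omega))
        omega)
  rw [if_pos (by omega : g ≤ g)] at hsrt
  rw [if_neg (bLp_g σ hg)] at hsrt
  rw [if_neg (by omega : ¬ g+1 ≤ g)] at hsrt
  rw [if_neg (bLp_g3 σ hg)] at hsrt
  omega

lemma F2 (hσ : σ ∈ StirlingSet n) (hg : g ≤ 2*n) :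
    dascQ (ins σ g) + (if Da σ g then 1 else 0) + (if Da σ (g+1) then 1 else 0)
      = dascQ σ + (if sval σ (g-1) < sval σ g then 1 else 0) := by
  rw [dascQ_eq_sum (ins σ g) ((2*n+1)+2) (by omega),
    dascQ_eq_sum σ (2*n+1) (by omega),
    sum_split (2*n+1) g (by omega)]
  rw [if_neg (bDa_g1 σ hg), if_neg (bDa_g2 σ hg)]
  have hsrt := sum_replace_two (M := 2*n+1) (a := g)
    (fun t => if Da (ins σ g) (if t ≤ g then t else t+2) then 1 else 0)
    (fun t => if Da σ t then 1 else 0) (by omega)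
    (fun t _ h1 h2 => pt_Da σ hg t h1 h2)
    (by
      by_cases hgn : g < 2*n
      · left; omega
      · right
        rw [if_neg (by omega : ¬ g+1 ≤ g)]
        rw [if_neg (bDa_g3 σ hg), if_neg]
        intro hcon
        obtain ⟨_, h2⟩ := hcon
        have : sval σ (g+1+1) = 0 := sval_zero σ _ (Or.inr (by omega))
        omega)
  rw [if_pos (by omega : g ≤ g)] at hsrt
  rw [if_neg (by omega : ¬ g+1 ≤ g)] at hsrt
  rw [if_neg (bDa_g3 σ hg)] at hsrt
  have hda : (if Da (ins σ g) g then 1 else 0)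
      = (if sval σ (g-1) < sval σ g then (1:ℕ) else 0) := by
    simp only [bDa_g σ hg]
  rw [hda] at hsrt
  omega

lemma F3 (hσ : σ ∈ StirlingSet n) (hg : g ≤ 2*n) :
    dpQ (ins σ g) + (if Dp σ g then 1 else 0) +
        (if g < 2*n then (if Dp σ (g+1) then 1 else 0) else 0)
      = dpQ σ + (if g < 2*n then (if sval σ (g+1) = sval σ (g+2) then 1 else 0) else 0) := by
  have hτ := ins_mem σ hσ g hg
  have hrep : dpQ (ins σ g) = ∑ t ∈ Finset.range ((2*n+1)+2),
      (if Dp (ins σ g) t then 1 else 0) := by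
    have := dpQ_eq_sum (ins σ g) hτ
    rw [this]
    congr 1
  rw [hrep, dpQ_eq_sum σ hσ, sum_split (2*n+1) g (by omega)]
  rw [if_neg (bDp_g1 σ hg), if_neg (bDp_g2 σ hg)]
  by_cases hgn : g < 2*n
  · rw [if_pos hgn, if_pos hgn]
    have hsrt := sum_replace_two (M := 2*n+1) (a := g)
      (fun t => if Dp (ins σ g) (if t ≤ g then t else t+2) then 1 else 0)
      (fun t => if Dp σ t then 1 else 0) (by omega)
      (fun t _ h1 h2 => pt_Dp σ hg t h1 h2)
      (Or.inl (by omega))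
    rw [if_pos (by omega : g ≤ g)] at hsrt
    rw [if_neg (bDp_g σ hg)] at hsrt
    rw [if_neg (by omega : ¬ g+1 ≤ g)] at hsrt
    have hd3 : (if Dp (ins σ g) (g+1+2) then 1 else 0)
        = (if sval σ (g+1) = sval σ (g+2) then (1:ℕ) else 0) := by
      have e : g+1+2 = g+3 := by omega
      rw [e]
      simp only [bDp_g3 σ hg]
    rw [hd3] at hsrt
    omega
  · rw [if_neg hgn, if_neg hgn]
    have hge : g = 2*n := by omega
    have hz : (if Dp σ g then (1:ℕ) else 0) = 0 := by
      rw [if_neg]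
      exact Dp_false σ hσ g (Or.inr hge)
    rw [hz]
    have hcg : ∑ t ∈ Finset.range (2*n+1),
        (if Dp (ins σ g) (if t ≤ g then t else t+2) then 1 else 0)
        = ∑ t ∈ Finset.range (2*n+1), (if Dp σ t then (1:ℕ) else 0) := by
      apply Finset.sum_congr rfl
      intro t ht
      simp only [Finset.mem_range] at ht
      by_cases htg : t = g
      · subst htg
        rw [if_pos (le_refl t)]
        rw [if_neg (bDp_g σ hg), if_neg (Dp_false σ hσ t (Or.inr hge))]
      · exact pt_Dp σ hg t htg (by omega)
    rw [hcg]

end Dev6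

section Dev7
set_option maxHeartbeats 1000000 in
lemma gap_types {n : ℕ} (σ : Fin (2*n) → Fin (n+1)) {g : ℕ}
    (hσ : σ ∈ StirlingSet n) (hg : g ≤ 2*n) :
    (Lp σ g ∧ lapQ (ins σ g) = lapQ σ ∧ dascQ (ins σ g) = dascQ σ + 1
        ∧ dpQ (ins σ g) = dpQ σ)
  ∨ (Lp σ (g+1) ∧ lapQ (ins σ g) = lapQ σ ∧ dascQ (ins σ g) = dascQ σ
        ∧ dpQ (ins σ g) = dpQ σ + 1)
  ∨ (Da σ (g+1) ∧ lapQ (ins σ g) = lapQ σ + 1 ∧ dascQ (ins σ g) + 1 = dascQ σ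
        ∧ dpQ (ins σ g) = dpQ σ)
  ∨ (Dp σ g ∧ lapQ (ins σ g) = lapQ σ + 1 ∧ dascQ (ins σ g) = dascQ σ
        ∧ dpQ (ins σ g) + 1 = dpQ σ)
  ∨ (¬ Lp σ g ∧ ¬ Lp σ (g+1) ∧ ¬ Da σ (g+1) ∧ ¬ Dp σ g
        ∧ lapQ (ins σ g) = lapQ σ + 1 ∧ dascQ (ins σ g) = dascQ σ
        ∧ dpQ (ins σ g) = dpQ σ) := by
  have f1 := F1 σ hσ hg
  have f2 := F2 σ hσ hg
  have f3 := F3 σ hσ hg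
  simp only [Lp, Da, Dp, Nat.add_sub_cancel, show g+1+1 = g+2 from rfl] at f1 f2 f3
  by_cases hA : sval σ (g-1) < sval σ g ∧ sval σ g = sval σ (g+1)
  · have hsg : 1 ≤ sval σ g := by omega
    have hnt : ¬ (sval σ (g+1) = sval σ (g+2)) := fun he =>
      no_triple σ hσ g (by omega) hA.2 he
    refine Or.inl ⟨hA, ?_, ?_, ?_⟩ <;> grind
  · by_cases hB : sval σ g < sval σ (g+1) ∧ sval σ (g+1) = sval σ (g+2)
    · have hgl : g < 2*n := by
        by_contra hc
        have h0 : sval σ (g+2) = 0 := sval_zero σ _ (Or.inr (by omega))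
        omega
      refine Or.inr (Or.inl ⟨hB, ?_, ?_, ?_⟩) <;> grind
    · by_cases hC : sval σ g < sval σ (g+1) ∧ sval σ (g+1) < sval σ (g+2)
      · refine Or.inr (Or.inr (Or.inl ⟨hC, ?_, ?_, ?_⟩)) <;> grind
      · by_cases hD : sval σ g < sval σ (g-1) ∧ sval σ g = sval σ (g+1)
        · have hgge : 2 ≤ g := by
            by_contra hc
            have e : g - 1 = 0 := by omega
            rw [e] at hD
            have h0 : sval σ 0 = 0 := sval_zero σ 0 (Or.inl rfl)
            omega
          have hsg : 1 ≤ sval σ g := sval_pos σ hσ g (by omega) (by omega)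
          have hnt : ¬ (sval σ (g+1) = sval σ (g+2)) := fun he =>
            no_triple σ hσ g (by omega) hD.2 he
          refine Or.inr (Or.inr (Or.inr (Or.inl ⟨hD, ?_, ?_, ?_⟩))) <;> grind
        · by_cases hAA : sval σ (g-1) < sval σ g
          · have hnp : ¬ (sval σ (g+1) < sval σ g) := no_peak σ hσ g hAA
            by_cases hPL : sval σ (g+1) = sval σ (g+2)
            · by_cases hgl : g < 2*n
              · have hp1 : 1 ≤ sval σ (g+1) := sval_pos σ hσ (g+1) (by omega) (by omega)
                have hnt : ¬ (sval σ g = sval σ (g+1)) := fun he =>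
                  no_triple σ hσ g (by omega) he hPL
                refine Or.inr (Or.inr (Or.inr (Or.inr ⟨hA, hB, hC, hD, ?_, ?_, ?_⟩))) <;> grind
              · refine Or.inr (Or.inr (Or.inr (Or.inr ⟨hA, hB, hC, hD, ?_, ?_, ?_⟩))) <;> grind
            · refine Or.inr (Or.inr (Or.inr (Or.inr ⟨hA, hB, hC, hD, ?_, ?_, ?_⟩))) <;> grind
          · by_cases hPL : sval σ (g+1) = sval σ (g+2)
            · by_cases hgl : g < 2*n
              · have hp1 : 1 ≤ sval σ (g+1) := sval_pos σ hσ (g+1) (by omega) (by omega)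
                have hnt : ¬ (sval σ g = sval σ (g+1)) := fun he =>
                  no_triple σ hσ g (by omega) he hPL
                refine Or.inr (Or.inr (Or.inr (Or.inr ⟨hA, hB, hC, hD, ?_, ?_, ?_⟩))) <;> grind
              · refine Or.inr (Or.inr (Or.inr (Or.inr ⟨hA, hB, hC, hD, ?_, ?_, ?_⟩))) <;> grind
            · refine Or.inr (Or.inr (Or.inr (Or.inr ⟨hA, hB, hC, hD, ?_, ?_, ?_⟩))) <;> grind

end Dev7

section Dev8
variable {n : ℕ}

lemma ins_inj (σ1 σ2 : Fin (2*n) → Fin (n+1)) (g1 g2 : ℕ)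
    (hg1 : g1 ≤ 2*n) (hg2 : g2 ≤ 2*n) (h : ins σ1 g1 = ins σ2 g2) :
    σ1 = σ2 ∧ g1 = g2 := by
  have hs : ∀ t, sval (ins σ1 g1) t = sval (ins σ2 g2) t := fun t => by rw [h]
  have hgg : g1 = g2 := by
    by_contra hne
    rcases Nat.lt_or_ge g1 g2 with hlt | hge
    · have h1 := hs (g1+1)
      rw [sval_ins_mid σ1 hg1 (by omega) (by omega),
        sval_ins_low σ2 hg2 (by omega)] at h1
      have := sval_le σ2 (g1+1)
      omega
    · have hlt : g2 < g1 := by omega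
      have h1 := hs (g2+1)
      rw [sval_ins_mid σ2 hg2 (by omega) (by omega),
        sval_ins_low σ1 hg1 (by omega)] at h1
      have := sval_le σ1 (g2+1)
      omega
  subst hgg
  refine ⟨?_, rfl⟩
  funext q
  apply Fin.ext
  have e1 : (σ1 q : ℕ) = sval σ1 ((q:ℕ)+1) := by
    rw [sval_of_pos σ1 _ (by omega) (by omega)]; congr 1
  have e2 : (σ2 q : ℕ) = sval σ2 ((q:ℕ)+1) := by
    rw [sval_of_pos σ2 _ (by omega) (by omega)]; congr 1
  rw [e1, e2]
  by_cases hq : (q:ℕ)+1 ≤ g1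
  · have h1 := hs ((q:ℕ)+1)
    rwa [sval_ins_low σ1 hg1 hq, sval_ins_low σ2 hg1 hq] at h1
  · have h1 := hs ((q:ℕ)+3)
    rw [sval_ins_high σ1 hg1 (by omega), sval_ins_high σ2 hg1 (by omega)] at h1
    have e3 : (q:ℕ)+3-2 = (q:ℕ)+1 := by omega
    rwa [e3] at h1

/-- extraction of the underlying order-`n` permutation -/
def extract (τ : Fin (2*(n+1)) → Fin (n+2)) (g : ℕ) : Fin (2*n) → Fin (n+1) :=
  fun t => ⟨min (sval τ (if (t:ℕ)+1 ≤ g then (t:ℕ)+1 else (t:ℕ)+3)) n, by omega⟩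

lemma sval_extract (τ : Fin (2*(n+1)) → Fin (n+2)) (g t : ℕ)
    (h1 : 1 ≤ t) (h2 : t ≤ 2*n) :
    sval (extract τ g) t = min (sval τ (if t ≤ g then t else t+2)) n := by
  rw [sval_of_pos _ t h1 h2]
  unfold extract
  have e1 : t-1+1 = t := by omega
  have e2 : t-1+3 = t+2 := by omega
  simp only [e1, e2]

lemma ins_surj (τ : Fin (2*(n+1)) → Fin (n+2)) (hτ : τ ∈ StirlingSet (n+1)) :
    ∃ σ g, σ ∈ StirlingSet n ∧ g ≤ 2*n ∧ ins σ g = τ := by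
  have hleτ := sval_le τ
  -- the two positions of the letter n+1
  have hocc := (mem_SS τ).mp hτ |>.1 (Fin.last (n+1)) (by simp)
  rw [occ_iff τ (Fin.last (n+1))] at hocc
  simp only [Fin.val_last] at hocc
  obtain ⟨p, q, hpq, hset⟩ := Finset.card_eq_two.mp hocc
  -- wlog p < q
  have hmem : ∀ s, (1 ≤ s ∧ s ≤ 2*(n+1)) ∧ sval τ s = n+1 ↔ (s = p ∨ s = q) := by
    intro s
    constructor
    · intro hh
      have : s ∈ (Finset.Icc 1 (2*(n+1))).filter (fun t => sval τ t = n+1) := by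
        simp only [Finset.mem_filter, Finset.mem_Icc]
        exact ⟨hh.1, hh.2⟩
      rw [hset] at this
      simpa using this
    · intro hh
      have : s ∈ ({p, q} : Finset ℕ) := by simpa using hh
      rw [← hset] at this
      simp only [Finset.mem_filter, Finset.mem_Icc] at this
      exact ⟨this.1, this.2⟩
  have hp' := (hmem p).mpr (Or.inl rfl)
  have hq' := (hmem q).mpr (Or.inr rfl)
  -- rename so that P < Q
  obtain ⟨P, Q, hPQ, hPv, hQv, hPr, hQr, hPQset⟩ :
      ∃ P Q, P < Q ∧ ((1 ≤ P ∧ P ≤ 2*(n+1)) ∧ sval τ P = n+1)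
        ∧ ((1 ≤ Q ∧ Q ≤ 2*(n+1)) ∧ sval τ Q = n+1) ∧ True ∧ True
        ∧ (∀ s, (1 ≤ s ∧ s ≤ 2*(n+1)) ∧ sval τ s = n+1 ↔ (s = P ∨ s = Q)) := by
    rcases Nat.lt_or_ge p q with hlt | hge
    · exact ⟨p, q, hlt, hp', hq', trivial, trivial, fun s => by rw [hmem s]⟩
    · refine ⟨q, p, by omega, hq', hp', trivial, trivial, fun s => by rw [hmem s]; tauto⟩
  -- Q = P + 1
  have hQP : Q = P + 1 := by
    by_contra hne
    have hlt : P + 1 < Q := by omega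
    have := sval_cond τ hτ P (P+1) Q (by omega) (by omega) (by omega) (by omega)
      (by rw [hPv.2, hQv.2])
    have := hleτ (P+1)
    omega
  set g : ℕ := P - 1 with hgdef
  have hg : g ≤ 2*n := by omega
  have hsmall : ∀ s, s ≠ P → s ≠ Q → sval τ s ≤ n := by
    intro s hs1 hs2
    by_cases hin : 1 ≤ s ∧ s ≤ 2*(n+1)
    · have := hleτ s
      have hne : sval τ s ≠ n+1 := by
        intro he
        have := (hPQset s).mp ⟨hin, he⟩
        tauto
      omega
    · rw [sval_zero τ s (by omega)]
      omega
  set σ' : Fin (2*n) → Fin (n+1) := extract τ g with hσdef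
  have hse : ∀ t, 1 ≤ t → t ≤ 2*n →
      sval σ' t = sval τ (if t ≤ g then t else t+2) := by
    intro t h1 h2
    rw [sval_extract τ g t h1 h2]
    have : sval τ (if t ≤ g then t else t+2) ≤ n := by
      split_ifs with h
      · exact hsmall t (by omega) (by omega)
      · exact hsmall (t+2) (by omega) (by omega)
    omega
  -- the inserted permutation agrees with τ on all sval values
  have hagree : ∀ s, sval (ins σ' g) s = sval τ s := by
    intro s
    by_cases h0 : s = 0
    · subst h0
      rw [sval_zero _ 0 (Or.inl rfl), sval_zero τ 0 (Or.inl rfl)]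
    · by_cases hbig : s > 2*(n+1)
      · rw [sval_zero τ s (Or.inr (by omega))]
        rw [sval_ins_high σ' hg (by omega), sval_zero σ' (s-2) (Or.inr (by omega))]
      · by_cases hl : s ≤ g
        · rw [sval_ins_low σ' hg hl, hse s (by omega) (by omega)]
          rw [if_pos hl]
        · by_cases hm : s ≤ g+2
          · rw [sval_ins_mid σ' hg (by omega) hm]
            have : s = P ∨ s = Q := by omega
            rcases this with h | h
            · rw [h, hPv.2]
            · rw [h, hQv.2]
          · rw [sval_ins_high σ' hg (by omega), hse (s-2) (by omega) (by omega)]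
            rw [if_neg (by omega)]
            congr 1
            omega
  -- membership of σ' in the Stirling set
  have hσ'mem : σ' ∈ StirlingSet n := by
    apply (mem_SS σ').mpr
    constructor
    · intro v hv
      rw [occ_iff]
      have hvn : (v:ℕ) ≤ n := by have := v.isLt; omega
      have hbij : ((Finset.Icc 1 (2*n)).filter (fun t => sval σ' t = (v:ℕ))).card
          = ((Finset.Icc 1 (2*(n+1))).filter (fun t => sval τ t = (v:ℕ))).card := by
        refine Finset.card_bij (fun t _ => if t ≤ g then t else t+2) ?_ ?_ ?_
        · intro t ht
          simp only [Finset.mem_filter, Finset.mem_Icc] at ht ⊢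
          rw [hse t ht.1.1 ht.1.2] at ht
          by_cases hl : t ≤ g
          · rw [if_pos hl] at ht ⊢
            exact ⟨⟨by omega, by omega⟩, ht.2⟩
          · rw [if_neg hl] at ht ⊢
            exact ⟨⟨by omega, by omega⟩, ht.2⟩
        · intro t1 h1 t2 h2 he
          split_ifs at he <;> omega
        · intro s hs
          simp only [Finset.mem_filter, Finset.mem_Icc] at hs
          have hsP : s ≠ P := by
            intro h; rw [h, hPv.2] at hs; omega
          have hsQ : s ≠ Q := by
            intro h; rw [h, hQv.2] at hs; omega
          by_cases hl : s ≤ g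
          · refine ⟨s, ?_, by rw [if_pos hl]⟩
            simp only [Finset.mem_filter, Finset.mem_Icc]
            rw [hse s (by omega) (by omega), if_pos hl]
            exact ⟨⟨by omega, by omega⟩, hs.2⟩
          · have hs3 : g+3 ≤ s := by omega
            refine ⟨s-2, ?_, by rw [if_neg (by omega)]; omega⟩
            simp only [Finset.mem_filter, Finset.mem_Icc]
            rw [hse (s-2) (by omega) (by omega), if_neg (by omega)]
            have e : s-2+2 = s := by omega
            rw [e]
            exact ⟨⟨by omega, by omega⟩, hs.2⟩
      rw [hbij]
      have h2 := (mem_SS τ).mp hτ |>.1 ⟨(v:ℕ), by omega⟩ (by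
        show ((⟨(v:ℕ), by omega⟩ : Fin (n+2)) : ℕ) ≠ 0
        simp only [Fin.val_mk]
        omega)
      rw [occ_iff τ ⟨(v:ℕ), by omega⟩] at h2
      exact h2
    · apply cond_of_sval
      intro a b c ha hab hbc hc he
      rw [hse a (by omega) (by omega), hse b (by omega) (by omega),
        hse c (by omega) (by omega)] at *
      apply sval_cond τ hτ _ _ _ ?_ ?_ ?_ ?_ he
      · split_ifs <;> omega
      · split_ifs <;> omega
      · split_ifs <;> omega
      · split_ifs <;> omega
  refine ⟨σ', g, hσ'mem, hg, ?_⟩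
  funext r
  apply Fin.ext
  have e1 : (ins σ' g r : ℕ) = sval (ins σ' g) ((r:ℕ)+1) := by
    rw [sval_of_pos _ _ (by omega) (by omega)]; congr 1
  have e2 : (τ r : ℕ) = sval τ ((r:ℕ)+1) := by
    rw [sval_of_pos _ _ (by omega) (by omega)]; congr 1
  rw [e1, e2, hagree]

end Dev8

section Dev9
variable {n : ℕ}

lemma mutex1 (σ : Fin (2*n) → Fin (n+1)) (g : ℕ) :
    Lp σ g → ¬ Lp σ (g+1) ∧ ¬ Da σ (g+1) ∧ ¬ Dp σ g := by
  unfold Lp Da Dp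
  simp only [Nat.add_sub_cancel]
  omega

lemma mutex2 (σ : Fin (2*n) → Fin (n+1)) (g : ℕ) :
    Lp σ (g+1) → ¬ Lp σ g ∧ ¬ Da σ (g+1) ∧ ¬ Dp σ g := by
  unfold Lp Da Dp
  simp only [Nat.add_sub_cancel]
  omega

lemma mutex3 (σ : Fin (2*n) → Fin (n+1)) (g : ℕ) :
    Da σ (g+1) → ¬ Lp σ g ∧ ¬ Lp σ (g+1) ∧ ¬ Dp σ g := by
  unfold Lp Da Dp
  simp only [Nat.add_sub_cancel]
  omega

lemma mutex4 (σ : Fin (2*n) → Fin (n+1)) (g : ℕ) :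
    Dp σ g → ¬ Lp σ g ∧ ¬ Lp σ (g+1) ∧ ¬ Da σ (g+1) := by
  unfold Lp Da Dp
  simp only [Nat.add_sub_cancel]
  omega

lemma cnt1 (σ : Fin (2*n) → Fin (n+1)) (hσ : σ ∈ StirlingSet n) :
    ∑ g ∈ Finset.range (2*n+1), (if Lp σ g then 1 else 0) = lapQ σ :=
  (lapQ_eq_sum σ hσ (2*n+1) (by omega)).symm

lemma cnt2 (σ : Fin (2*n) → Fin (n+1)) (hσ : σ ∈ StirlingSet n) :
    ∑ g ∈ Finset.range (2*n+1), (if Lp σ (g+1) then 1 else 0) = lapQ σ := by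
  have h := lapQ_eq_sum σ hσ (2*n+2) (by omega)
  rw [show 2*n+2 = (2*n+1)+1 by omega] at h
  rw [Finset.sum_range_succ'] at h
  have h0 : ¬ Lp σ 0 := Lp_false σ hσ 0 (Or.inl rfl)
  rw [if_neg h0] at h
  omega

lemma cnt3 (σ : Fin (2*n) → Fin (n+1)) (hσ : σ ∈ StirlingSet n) :
    ∑ g ∈ Finset.range (2*n+1), (if Da σ (g+1) then 1 else 0) = dascQ σ := by
  have h := dascQ_eq_sum σ (2*n+2) (by omega)
  rw [show 2*n+2 = (2*n+1)+1 by omega] at h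
  rw [Finset.sum_range_succ'] at h
  have h0 : ¬ Da σ 0 := Da_false σ 0 (Or.inl rfl)
  rw [if_neg h0] at h
  omega

lemma cnt4 (σ : Fin (2*n) → Fin (n+1)) (hσ : σ ∈ StirlingSet n) :
    ∑ g ∈ Finset.range (2*n+1), (if Dp σ g then 1 else 0) = dpQ σ :=
  (dpQ_eq_sum σ hσ).symm

lemma cnt5 (σ : Fin (2*n) → Fin (n+1)) (hσ : σ ∈ StirlingSet n) :
    lapQ σ + lapQ σ + dascQ σ + dpQ σ +
      ∑ g ∈ Finset.range (2*n+1),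
        (if (¬ Lp σ g ∧ ¬ Lp σ (g+1) ∧ ¬ Da σ (g+1) ∧ ¬ Dp σ g) then 1 else 0)
    = 2*n+1 := by
  have hpart : ∀ g, ((if Lp σ g then 1 else 0) + (if Lp σ (g+1) then 1 else 0)
      + (if Da σ (g+1) then 1 else 0) + (if Dp σ g then 1 else 0)
      + (if (¬ Lp σ g ∧ ¬ Lp σ (g+1) ∧ ¬ Da σ (g+1) ∧ ¬ Dp σ g) then 1 else 0) : ℕ) = 1 := by
    intro g
    by_cases h1 : Lp σ g
    · obtain ⟨a2, a3, a4⟩ := mutex1 σ g h1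
      simp [h1, a2, a3, a4]
    · by_cases h2 : Lp σ (g+1)
      · obtain ⟨b1, b3, b4⟩ := mutex2 σ g h2
        simp [h1, h2, b3, b4]
      · by_cases h3 : Da σ (g+1)
        · obtain ⟨c1, c2, c4⟩ := mutex3 σ g h3
          simp [h1, h2, h3, c4]
        · by_cases h4 : Dp σ g
          · simp [h1, h2, h3, h4]
          · simp [h1, h2, h3, h4]
  have htot : ∑ g ∈ Finset.range (2*n+1), ((if Lp σ g then 1 else 0)
      + (if Lp σ (g+1) then 1 else 0) + (if Da σ (g+1) then 1 else 0)
      + (if Dp σ g then 1 else 0)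
      + (if (¬ Lp σ g ∧ ¬ Lp σ (g+1) ∧ ¬ Da σ (g+1) ∧ ¬ Dp σ g) then 1 else 0) : ℕ)
      = 2*n+1 := by
    rw [Finset.sum_congr rfl (fun g _ => hpart g)]
    simp
  rw [Finset.sum_add_distrib, Finset.sum_add_distrib, Finset.sum_add_distrib,
    Finset.sum_add_distrib, cnt1 σ hσ, cnt2 σ hσ, cnt3 σ hσ, cnt4 σ hσ] at htot
  omega

set_option maxHeartbeats 1000000 in
lemma per_sigma (i j k : ℤ) (σ : Fin (2*n) → Fin (n+1)) (hσ : σ ∈ StirlingSet n) :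
    ((∑ g ∈ Finset.range (2*n+1),
        (if (lapQ (ins σ g) : ℤ) = i ∧ (dascQ (ins σ g) : ℤ) = j ∧ (dpQ (ins σ g) : ℤ) = k
          then 1 else 0) : ℕ) : ℤ)
    = i * (if (lapQ σ : ℤ) = i ∧ (dascQ σ : ℤ) = j-1 ∧ (dpQ σ : ℤ) = k then 1 else 0)
    + i * (if (lapQ σ : ℤ) = i ∧ (dascQ σ : ℤ) = j ∧ (dpQ σ : ℤ) = k-1 then 1 else 0)
    + (j+1) * (if (lapQ σ : ℤ) = i-1 ∧ (dascQ σ : ℤ) = j+1 ∧ (dpQ σ : ℤ) = k then 1 else 0)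
    + (k+1) * (if (lapQ σ : ℤ) = i-1 ∧ (dascQ σ : ℤ) = j ∧ (dpQ σ : ℤ) = k+1 then 1 else 0)
    + (2*(n:ℤ)+3-2*i-j-k) *
        (if (lapQ σ : ℤ) = i-1 ∧ (dascQ σ : ℤ) = j ∧ (dpQ σ : ℤ) = k then 1 else 0) := by
  have hpt : ∀ g ∈ Finset.range (2*n+1),
      (if (lapQ (ins σ g) : ℤ) = i ∧ (dascQ (ins σ g) : ℤ) = j ∧ (dpQ (ins σ g) : ℤ) = k
        then (1:ℕ) else 0)
      = (if (lapQ σ : ℤ) = i ∧ (dascQ σ : ℤ) = j-1 ∧ (dpQ σ : ℤ) = k then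
            (if Lp σ g then 1 else 0) else 0)
        + (if (lapQ σ : ℤ) = i ∧ (dascQ σ : ℤ) = j ∧ (dpQ σ : ℤ) = k-1 then
            (if Lp σ (g+1) then 1 else 0) else 0)
        + (if (lapQ σ : ℤ) = i-1 ∧ (dascQ σ : ℤ) = j+1 ∧ (dpQ σ : ℤ) = k then
            (if Da σ (g+1) then 1 else 0) else 0)
        + (if (lapQ σ : ℤ) = i-1 ∧ (dascQ σ : ℤ) = j ∧ (dpQ σ : ℤ) = k+1 then
            (if Dp σ g then 1 else 0) else 0)
        + (if (lapQ σ : ℤ) = i-1 ∧ (dascQ σ : ℤ) = j ∧ (dpQ σ : ℤ) = k then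
            (if (¬ Lp σ g ∧ ¬ Lp σ (g+1) ∧ ¬ Da σ (g+1) ∧ ¬ Dp σ g) then 1 else 0) else 0) := by
    intro g hgm
    simp only [Finset.mem_range] at hgm
    have hg : g ≤ 2*n := by omega
    rcases gap_types σ hσ hg with ⟨hT, e1, e2, e3⟩ | ⟨hT, e1, e2, e3⟩ | ⟨hT, e1, e2, e3⟩
      | ⟨hT, e1, e2, e3⟩ | ⟨hT1, hT2, hT3, hT4, e1, e2, e3⟩
    · obtain ⟨a2, a3, a4⟩ := mutex1 σ g hT
      rw [if_pos hT, if_neg a2, if_neg a3, if_neg a4, if_neg (show ¬(¬ Lp σ g ∧ ¬ Lp σ (g+1) ∧ ¬ Da σ (g+1) ∧ ¬ Dp σ g) from fun hc => hc.1 hT)]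
      simp only [e1, e2, e3, ite_self, Nat.cast_add, Nat.cast_one]
      split_ifs <;> omega
    · obtain ⟨b1, b3, b4⟩ := mutex2 σ g hT
      rw [if_pos hT, if_neg b1, if_neg b3, if_neg b4, if_neg (show ¬(¬ Lp σ g ∧ ¬ Lp σ (g+1) ∧ ¬ Da σ (g+1) ∧ ¬ Dp σ g) from fun hc => hc.2.1 hT)]
      simp only [e1, e2, e3, ite_self, Nat.cast_add, Nat.cast_one]
      split_ifs <;> omega
    · obtain ⟨c1, c2, c4⟩ := mutex3 σ g hT
      rw [if_pos hT, if_neg c1, if_neg c2, if_neg c4, if_neg (show ¬(¬ Lp σ g ∧ ¬ Lp σ (g+1) ∧ ¬ Da σ (g+1) ∧ ¬ Dp σ g) from fun hc => hc.2.2.1 hT)]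
      have e2' : (dascQ (ins σ g) : ℤ) = (dascQ σ : ℤ) - 1 := by omega
      simp only [e1, e3, e2', ite_self, Nat.cast_add, Nat.cast_one]
      split_ifs <;> omega
    · obtain ⟨d1, d2, d3⟩ := mutex4 σ g hT
      rw [if_pos hT, if_neg d1, if_neg d2, if_neg d3, if_neg (show ¬(¬ Lp σ g ∧ ¬ Lp σ (g+1) ∧ ¬ Da σ (g+1) ∧ ¬ Dp σ g) from fun hc => hc.2.2.2 hT)]
      have e3' : (dpQ (ins σ g) : ℤ) = (dpQ σ : ℤ) - 1 := by omega
      simp only [e1, e2, e3', ite_self, Nat.cast_add, Nat.cast_one]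
      split_ifs <;> omega
    · rw [if_pos (show (¬ Lp σ g ∧ ¬ Lp σ (g+1) ∧ ¬ Da σ (g+1) ∧ ¬ Dp σ g) from ⟨hT1, hT2, hT3, hT4⟩), if_neg hT1, if_neg hT2, if_neg hT3, if_neg hT4]
      simp only [e1, e2, e3, ite_self, Nat.cast_add, Nat.cast_one]
      split_ifs <;> omega
  rw [Finset.sum_congr rfl hpt]
  rw [Finset.sum_add_distrib, Finset.sum_add_distrib, Finset.sum_add_distrib,
    Finset.sum_add_distrib]
  have pull : ∀ (C : Prop) (_ : Decidable C) (f : ℕ → ℕ),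
      ∑ g ∈ Finset.range (2*n+1), (if C then f g else 0)
        = if C then ∑ g ∈ Finset.range (2*n+1), f g else 0 := by
    intro C hC f
    split_ifs <;> simp
  rw [pull _ _ _, pull _ _ _, pull _ _ _, pull _ _ _, pull _ _ _]
  rw [cnt1 σ hσ, cnt2 σ hσ, cnt3 σ hσ, cnt4 σ hσ]
  have h5 := cnt5 σ hσ
  set S5 := ∑ g ∈ Finset.range (2*n+1),
      (if (¬ Lp σ g ∧ ¬ Lp σ (g+1) ∧ ¬ Da σ (g+1) ∧ ¬ Dp σ g) then 1 else 0) with hS5def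
  split_ifs <;> omega

end Dev9

section Dev10

lemma Pnum_eq (m : ℕ) (a b c : ℤ) :
    Pnum m a b c = (((StirlingSet m).filter
      (fun σ => (lapQ σ : ℤ) = a ∧ (dascQ σ : ℤ) = b ∧ (dpQ σ : ℤ) = c)).card : ℤ) := by
  unfold Pnum
  split_ifs with h
  · rfl
  · symm
    rw [Nat.cast_eq_zero, Finset.card_eq_zero, Finset.filter_eq_empty_iff]
    intro σ _
    intro hc
    obtain ⟨c1, c2, c3⟩ := hc
    exact h ⟨by omega, by omega, by omega⟩

end Dev10

theorem statement_12 (n : ℕ) (i j k : ℤ) (hi : 0 ≤ i) (hj : 0 ≤ j) (hk : 0 ≤ k) :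
    Pnum (n + 1) i j k =
      i * Pnum n i (j - 1) k + i * Pnum n i j (k - 1) +
        (j + 1) * Pnum n (i - 1) (j + 1) k + (k + 1) * Pnum n (i - 1) j (k + 1) +
        (2 * (n : ℤ) + 3 - 2 * i - j - k) * Pnum n (i - 1) j k := by

  rw [Pnum_eq, Pnum_eq, Pnum_eq, Pnum_eq, Pnum_eq, Pnum_eq]
  have hbij : (((StirlingSet n) ×ˢ (Finset.range (2*n+1))).filter
        (fun p => (lapQ (ins p.1 p.2) : ℤ) = i ∧ (dascQ (ins p.1 p.2) : ℤ) = j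
          ∧ (dpQ (ins p.1 p.2) : ℤ) = k)).card
      = ((StirlingSet (n+1)).filter
        (fun τ => (lapQ τ : ℤ) = i ∧ (dascQ τ : ℤ) = j ∧ (dpQ τ : ℤ) = k)).card := by
    refine Finset.card_bij (fun p _ => ins p.1 p.2) ?_ ?_ ?_
    · intro p hp
      simp only [Finset.mem_filter, Finset.mem_product, Finset.mem_range] at hp ⊢
      exact ⟨ins_mem p.1 hp.1.1 p.2 (by omega), hp.2⟩
    · intro p1 h1 p2 h2 he
      simp only [Finset.mem_filter, Finset.mem_product, Finset.mem_range] at h1 h2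
      obtain ⟨hσ, hg⟩ := ins_inj p1.1 p2.1 p1.2 p2.2 (by omega) (by omega) he
      exact Prod.ext hσ hg
    · intro τ hτ
      simp only [Finset.mem_filter] at hτ
      obtain ⟨σ, g, hσm, hg, hins⟩ := ins_surj τ hτ.1
      refine ⟨(σ, g), ?_, hins⟩
      simp only [Finset.mem_filter, Finset.mem_product, Finset.mem_range]
      refine ⟨⟨hσm, by omega⟩, ?_⟩
      rw [hins]
      exact hτ.2
  rw [← hbij]
  rw [Finset.card_filter, Finset.sum_product]
  rw [Nat.cast_sum]
  rw [Finset.sum_congr rfl (fun σ hσm => per_sigma i j k σ hσm)]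
  rw [Finset.sum_add_distrib, Finset.sum_add_distrib, Finset.sum_add_distrib,
    Finset.sum_add_distrib]
  rw [← Finset.mul_sum, ← Finset.mul_sum, ← Finset.mul_sum, ← Finset.mul_sum,
    ← Finset.mul_sum]
  simp only [Finset.sum_boole]
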